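/- arXiv:1009.4600 — 3 statements merged into one kernel-verified Lean document; each statement's English description precedes it below -/
import Mathlib

section
/- Let A be an admissible partition of C^s and Ω = {Y₀, …, Y_t} a finite set of admissible partitions with A ≤ Y_i for all i. Then an admissible partition M equals glb_A(Ω) if and only if A ≤ M, M ≤ Y_i for all i, and there is no admissible partition N with M < N and N ≤ Y_i for all i. -/
namespace BrinThompson

/-- A finite binary word. -/
abbrev Word : Type := List Bool

/-- A box in `C^s`, recorded as the tuple of binary words whose cylinders form the product. -/
abbrev Box (s : ℕ) : Type := Fin s → Word

/-- The box obtained from `b` by replacing its `i`-th word `u` by `u ++ [bit]`. -/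
def expandBox {s : ℕ} (i : Fin s) (bit : Bool) (b : Box s) : Box s :=
  Function.update b i (b i ++ [bit])

/-- `B` is obtained from `A` by a simple expansion of colour `i`: one box of `A` is replaced by
its two halves in direction `i`. -/
def SimpleExpansionC {s : ℕ} (i : Fin s) (A B : Finset (Box s)) : Prop :=
  ∃ b ∈ A, B = insert (expandBox i false b) (insert (expandBox i true b) (A.erase b))

/-- `B` is obtained from `A` by a simple expansion of some colour. -/
def SimpleExpansion {s : ℕ} (A B : Finset (Box s)) : Prop :=
  ∃ i : Fin s, SimpleExpansionC i A B

/-- `Expands A B` (`A ≤ B`): `B` is a descendant of `A`, i.e. `B` is obtained from `A` by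
finitely many simple expansions. -/
def Expands {s : ℕ} (A B : Finset (Box s)) : Prop :=
  Relation.ReflTransGen SimpleExpansion A B

/-- The one-element partition `{C^s}`. -/
def trivialPartition (s : ℕ) : Finset (Box s) := {fun _ => []}

/-- An admissible partition of `C^s`. -/
def Admissible {s : ℕ} (A : Finset (Box s)) : Prop :=
  Expands (trivialPartition s) A

/-- `M = glb_A(Ω)`: the greatest lower bound of `Ω` above `A`. -/
def IsGlbAbove {s : ℕ} (A : Finset (Box s)) (Ω : Set (Finset (Box s)))
    (M : Finset (Box s)) : Prop :=
  Admissible M ∧ Expands A M ∧ (∀ B ∈ Ω, Expands M B) ∧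
    ∀ N : Finset (Box s), Admissible N → Expands A N → (∀ B ∈ Ω, Expands N B) → Expands N M

/-- The depth of a box: the total length of its defining words. -/
def depth {s : ℕ} (b : Box s) : ℕ := ∑ i, (b i).length

/-- `BoxLE m b`: the box `m` contains the box `b`, i.e. each word of `m` is a prefix of the
corresponding word of `b`. -/
def BoxLE {s : ℕ} (m b : Box s) : Prop := ∀ i, m i <+: b i

/-- A box `y ∈ Y` is locally maximal with respect to `A`: for the box `m` of `A` containing `y`,
every box `j ∈ Y` contained in `m` satisfies `l(A,j) ≤ l(A,y)`, i.e. `depth j ≤ depth y`. -/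
def LocallyMaximal {s : ℕ} (A Y : Finset (Box s)) (y : Box s) : Prop :=
  ∀ m ∈ A, BoxLE m y → ∀ j ∈ Y, BoxLE m j → depth j ≤ depth y

/-- There is an edge of colour `i` between `y, y' ∈ Y` in the graph `Γ_A`: some simple
contraction `Z` of `Y` of colour `i` with `A ≤ Z` merges exactly `y` and `y'`. -/
def GammaAdjC {s : ℕ} (A Y : Finset (Box s)) (i : Fin s) (y y' : Box s) : Prop :=
  y ≠ y' ∧ y ∈ Y ∧ y' ∈ Y ∧
    ∃ Z : Finset (Box s), Admissible Z ∧ SimpleExpansionC i Z Y ∧ Expands A Z ∧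
      Y \ Z = {y, y'}

/-- The graph `Γ_A` (with its colours forgotten). -/
def Gamma {s : ℕ} (A Y : Finset (Box s)) : SimpleGraph (Box s) where
  Adj y y' := ∃ i : Fin s, GammaAdjC A Y i y y'
  symm := by
    constructor
    rintro y y' ⟨i, hne, hy, hy', Z, h1, h2, h3, h4⟩
    exact ⟨i, hne.symm, hy', hy, Z, h1, h2, h3, by rwa [Finset.pair_comm]⟩
  loopless := by constructor; rintro y ⟨i, hne, _⟩; exact hne rfl

/-- The geometric realization of the order complex (nerve) of the relation `le` on `P`:
finitely supported probability densities on `P` whose support is a chain, topologised as a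
subspace of `P → ℝ`. -/
abbrev OrderComplex (P : Type*) (le : P → P → Prop) : Type _ :=
  {f : P → ℝ // (Function.support f).Finite ∧ (∀ x, 0 ≤ f x) ∧
    IsChain le (Function.support f) ∧ ∑ᶠ x, f x = 1}

/-- A space is `t`-connected if it is nonempty, path-connected and its homotopy groups
`π_k` vanish for `1 ≤ k ≤ t`. -/
def TConnected (t : ℕ) (X : Type*) [TopologicalSpace X] : Prop :=
  Nonempty X ∧ PathConnectedSpace X ∧
    ∀ k : ℕ, 1 ≤ k → k ≤ t → ∀ x : X, Subsingleton (HomotopyGroup (Fin k) X x)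


section GlbProof

open List Relation

variable {s : ℕ}

attribute [local instance] Classical.propDecidable

/-- Two words are incomparable (neither is a prefix of the other). -/
def Incomp (u v : Word) : Prop := ¬ u <+: v ∧ ¬ v <+: u

lemma Incomp.symm {u v : Word} (h : Incomp u v) : Incomp v u := ⟨h.2, h.1⟩

lemma prefix_antisymm {u v : Word} (h1 : u <+: v) (h2 : v <+: u) : u = v :=
  h1.eq_of_length (le_antisymm h1.length_le h2.length_le)

lemma incomp_append_left {u v : Word} (t : Bool) (h : Incomp u v) : Incomp (u ++ [t]) v := by
  obtain ⟨h1, h2⟩ := h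
  constructor
  · intro h'; exact h1 ((u.prefix_append [t]).trans h')
  · intro h'
    rcases List.prefix_concat_iff.mp h' with h'' | h''
    · exact h1 (h'' ▸ u.prefix_append [t])
    · exact h2 h''

lemma incomp_append_bits (u : Word) : Incomp (u ++ [false]) (u ++ [true]) := by
  constructor <;> intro h <;> simpa using h.eq_of_length (by simp)

lemma exists_bit_prefix {u v : Word} (h : u <+: v) (hne : ¬ v <+: u) : ∃ t, u ++ [t] <+: v := by
  obtain ⟨r, rfl⟩ := h
  cases r with
  | nil => exact absurd (by simp) hne
  | cons t r' => exact ⟨t, (List.prefix_append_right_inj u).mpr ⟨r', rfl⟩⟩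

lemma Expands.trans {P Q R : Finset (Box s)} (h1 : Expands P Q) (h2 : Expands Q R) :
    Expands P R := Relation.ReflTransGen.trans h1 h2

lemma expandBox_apply_self (i : Fin s) (t : Bool) (b : Box s) :
    expandBox i t b i = b i ++ [t] := Function.update_self i _ b

lemma expandBox_apply_ne {i j : Fin s} (h : j ≠ i) (t : Bool) (b : Box s) :
    expandBox i t b j = b j := Function.update_of_ne h _ b

lemma boxLE_expandBox (i : Fin s) (t : Bool) (b : Box s) : BoxLE b (expandBox i t b) := by
  intro j
  by_cases hj : j = i
  · subst hj; rw [expandBox_apply_self]; exact (b j).prefix_append [t]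
  · rw [expandBox_apply_ne hj]

/-- A good finite set of boxes: distinct boxes are incomparable in some coordinate. -/
def Good (P : Finset (Box s)) : Prop :=
  ∀ b ∈ P, ∀ c ∈ P, b ≠ c → ∃ i, Incomp (b i) (c i)

lemma good_trivial : Good (trivialPartition s) := by
  intro b hb c hc hbc
  simp only [trivialPartition, Finset.mem_singleton] at hb hc
  exact absurd (hb.trans hc.symm) hbc

lemma Good.step {N N' : Finset (Box s)} (hN : Good N) (h : SimpleExpansion N N') : Good N' := by
  obtain ⟨i, b, hb, rfl⟩ := h
  have key : ∀ t : Bool, ∀ c ∈ N, c ≠ b → ∃ j, Incomp (expandBox i t b j) (c j) := by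
    intro t c hc hne
    obtain ⟨j, hj⟩ := hN b hb c hc (fun e => hne e.symm)
    by_cases hji : j = i
    · subst hji
      exact ⟨j, by rw [expandBox_apply_self]; exact incomp_append_left t hj⟩
    · exact ⟨j, by rw [expandBox_apply_ne hji]; exact hj⟩
  intro x hx y hy hxy
  rcases Finset.mem_insert.mp hx with rfl | hx
  · rcases Finset.mem_insert.mp hy with rfl | hy
    · exact absurd rfl hxy
    · rcases Finset.mem_insert.mp hy with rfl | hy
      · exact ⟨i, by rw [expandBox_apply_self, expandBox_apply_self]; exact incomp_append_bits _⟩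
      · exact key false y (Finset.mem_of_mem_erase hy) (Finset.ne_of_mem_erase hy)
  · rcases Finset.mem_insert.mp hx with rfl | hx
    · rcases Finset.mem_insert.mp hy with rfl | hy
      · refine ⟨i, ?_⟩
        rw [expandBox_apply_self, expandBox_apply_self]
        exact (incomp_append_bits _).symm
      · rcases Finset.mem_insert.mp hy with rfl | hy
        · exact absurd rfl hxy
        · exact key true y (Finset.mem_of_mem_erase hy) (Finset.ne_of_mem_erase hy)
    · rcases Finset.mem_insert.mp hy with rfl | hy
      · obtain ⟨j, hj⟩ := key false x (Finset.mem_of_mem_erase hx) (Finset.ne_of_mem_erase hx)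
        exact ⟨j, hj.symm⟩
      · rcases Finset.mem_insert.mp hy with rfl | hy
        · obtain ⟨j, hj⟩ := key true x (Finset.mem_of_mem_erase hx) (Finset.ne_of_mem_erase hx)
          exact ⟨j, hj.symm⟩
        · exact hN x (Finset.mem_of_mem_erase hx) y (Finset.mem_of_mem_erase hy) hxy

lemma good_of_expands {N N' : Finset (Box s)} (h : Expands N N') (hN : Good N) : Good N' := by
  induction h with
  | refl => exact hN
  | tail _ h2 ih => exact ih.step h2

lemma good_of_admissible {N : Finset (Box s)} (h : Admissible N) : Good N :=
  good_of_expands h good_trivial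

lemma expandBox_ne_self (i : Fin s) (t : Bool) (b : Box s) : expandBox i t b ≠ b := by
  intro h
  have := congrFun h i
  rw [expandBox_apply_self] at this
  simpa using congrArg List.length this

lemma card_step {N N' : Finset (Box s)} (hN : Good N) (h : SimpleExpansion N N') :
    N'.card = N.card + 1 := by
  obtain ⟨i, b, hb, rfl⟩ := h
  have hnotmem : ∀ t : Bool, expandBox i t b ∉ N.erase b := by
    intro t hmem
    obtain ⟨j, hj⟩ := hN _ (Finset.mem_of_mem_erase hmem) b hb (expandBox_ne_self i t b)
    exact hj.2 (boxLE_expandBox i t b j)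
  have hne : expandBox i false b ≠ expandBox i true b := by
    intro h
    have := congrFun h i
    rw [expandBox_apply_self, expandBox_apply_self] at this
    simpa using this
  have h1 : expandBox i false b ∉ insert (expandBox i true b) (N.erase b) := by
    simp only [Finset.mem_insert]
    rintro (h | h)
    · exact hne h
    · exact hnotmem false h
  rw [Finset.card_insert_of_notMem h1, Finset.card_insert_of_notMem (hnotmem true),
    Finset.card_erase_of_mem hb]
  have := Finset.card_pos.mpr ⟨b, hb⟩
  omega

lemma expands_eq_or_card_lt {N N' : Finset (Box s)} (hN : Good N) (h : Expands N N') :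
    N = N' ∨ N.card < N'.card := by
  induction h with
  | refl => exact Or.inl rfl
  | @tail c d h1 h2 ih =>
    right
    have hcard := card_step (good_of_expands h1 hN) h2
    rcases ih with rfl | hlt <;> omega

lemma expands_antisymm {N N' : Finset (Box s)} (hN : Good N) (hN' : Good N')
    (h1 : Expands N N') (h2 : Expands N' N) : N = N' := by
  rcases expands_eq_or_card_lt hN h1 with rfl | hlt
  · rfl
  · rcases expands_eq_or_card_lt hN' h2 with rfl | hlt'
    · rfl
    · omega

lemma exists_boxLE_of_expands {P Q : Finset (Box s)} (h : Expands P Q) :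
    ∀ q ∈ Q, ∃ p ∈ P, BoxLE p q := by
  induction h with
  | refl => exact fun q hq => ⟨q, hq, fun i => List.prefix_refl _⟩
  | @tail c d h1 h2 ih =>
    obtain ⟨i, b, hb, rfl⟩ := h2
    intro q hq
    rcases Finset.mem_insert.mp hq with rfl | hq
    · obtain ⟨p, hp, hple⟩ := ih b hb
      exact ⟨p, hp, fun j => (hple j).trans (boxLE_expandBox i false b j)⟩
    · rcases Finset.mem_insert.mp hq with rfl | hq
      · obtain ⟨p, hp, hple⟩ := ih b hb
        exact ⟨p, hp, fun j => (hple j).trans (boxLE_expandBox i true b j)⟩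
      · exact ih q (Finset.mem_of_mem_erase hq)

/-- `Compat b c`: the boxes `b`, `c` intersect (componentwise comparable words). -/
def Compat (b c : Box s) : Prop := ∀ i, b i <+: c i ∨ c i <+: b i

lemma Compat.symm {b c : Box s} (h : Compat b c) : Compat c b := fun i => (h i).symm

lemma compat_of_boxLE {m q : Box s} (h : BoxLE m q) : Compat m q := fun j => Or.inl (h j)

/-- The intersection of two compatible boxes: componentwise the longer word. -/
def joinBox (b c : Box s) : Box s := fun i => if b i <+: c i then c i else b i

lemma boxLE_joinBox_left (m b : Box s) : BoxLE m (joinBox m b) := by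
  intro j
  unfold joinBox
  split
  · assumption
  · exact List.prefix_refl _

lemma boxLE_joinBox_right {m b : Box s} (h : Compat m b) : BoxLE b (joinBox m b) := by
  intro j
  unfold joinBox
  split
  · exact List.prefix_refl _
  · rcases h j with h1 | h1
    · contradiction
    · exact h1

lemma joinBox_eq_right {m q : Box s} (h : BoxLE m q) : joinBox m q = q :=
  funext fun j => if_pos (h j)

lemma joinBox_comm {m n : Box s} (h : Compat m n) : joinBox m n = joinBox n m := by
  funext j
  simp only [joinBox]
  by_cases h1 : m j <+: n j <;> by_cases h2 : n j <+: m j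
  · rw [if_pos h1, if_pos h2]; exact prefix_antisymm h2 h1
  · rw [if_pos h1, if_neg h2]
  · rw [if_neg h1, if_pos h2]
  · rcases h j with h' | h'
    · exact absurd h' h1
    · exact absurd h' h2

/-- The common refinement of two families of boxes. -/
noncomputable def meetRef (P Q : Finset (Box s)) : Finset (Box s) :=
  ((P ×ˢ Q).filter fun p => Compat p.1 p.2).image fun p => joinBox p.1 p.2

lemma mem_meetRef {P Q : Finset (Box s)} {x : Box s} :
    x ∈ meetRef P Q ↔ ∃ m ∈ P, ∃ n ∈ Q, Compat m n ∧ joinBox m n = x := by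
  simp only [meetRef, Finset.mem_image, Finset.mem_filter, Finset.mem_product, Prod.exists]
  constructor
  · rintro ⟨m, n, ⟨⟨hm, hn⟩, hc⟩, rfl⟩
    exact ⟨m, hm, n, hn, hc, rfl⟩
  · rintro ⟨m, hm, n, hn, hc, rfl⟩
    exact ⟨m, n, ⟨⟨hm, hn⟩, hc⟩, rfl⟩

lemma meetRef_comm (P Q : Finset (Box s)) : meetRef P Q = meetRef Q P := by
  ext x
  rw [mem_meetRef, mem_meetRef]
  constructor
  · rintro ⟨m, hm, n, hn, hc, rfl⟩
    exact ⟨n, hn, m, hm, hc.symm, (joinBox_comm hc).symm⟩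
  · rintro ⟨m, hm, n, hn, hc, rfl⟩
    exact ⟨n, hn, m, hm, hc.symm, (joinBox_comm hc).symm⟩

lemma eq_of_compat_of_boxLE {P : Finset (Box s)} (hP : Good P) {p p' q : Box s}
    (hp : p ∈ P) (hp' : p' ∈ P) (hc : Compat p q) (hle : BoxLE p' q) : p = p' := by
  by_contra hne
  obtain ⟨j, hj⟩ := hP p hp p' hp' hne
  rcases hc j with h1 | h1
  · rcases List.prefix_or_prefix_of_prefix h1 (hle j) with h | h
    · exact hj.1 h
    · exact hj.2 h
  · exact hj.2 ((hle j).trans h1)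

lemma meetRef_self {P Q : Finset (Box s)} (hP : Good P) (h : Expands P Q) :
    meetRef P Q = Q := by
  ext x
  rw [mem_meetRef]
  constructor
  · rintro ⟨m, hm, n, hn, hc, rfl⟩
    obtain ⟨p, hp, hple⟩ := exists_boxLE_of_expands h n hn
    have := eq_of_compat_of_boxLE hP hm hp hc hple
    subst this
    rw [joinBox_eq_right hple]
    exact hn
  · intro hx
    obtain ⟨p, hp, hple⟩ := exists_boxLE_of_expands h x hx
    exact ⟨p, hp, x, hx, compat_of_boxLE hple, joinBox_eq_right hple⟩

lemma compat_of_compat_expand {m b : Box s} {i : Fin s} {t : Bool}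
    (h : Compat m (expandBox i t b)) : Compat m b := by
  intro j
  by_cases hj : j = i
  · subst hj
    have h1 := h j
    rw [expandBox_apply_self] at h1
    rcases h1 with h1 | h1
    · rcases List.prefix_concat_iff.mp h1 with h2 | h2
      · right; exact h2 ▸ (b j).prefix_append [t]
      · left; exact h2
    · right; exact ((b j).prefix_append [t]).trans h1
  · have h1 := h j
    rwa [expandBox_apply_ne hj] at h1

lemma compat_expand_of_prefix {m b : Box s} {i : Fin s} (hc : Compat m b)
    (hi : m i <+: b i) (t : Bool) :
    Compat m (expandBox i t b) ∧ joinBox m (expandBox i t b) = expandBox i t (joinBox m b) := by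
  constructor
  · intro j
    by_cases hj : j = i
    · subst hj; left; rw [expandBox_apply_self]; exact hi.trans ((b j).prefix_append [t])
    · rw [expandBox_apply_ne hj]; exact hc j
  · funext j
    by_cases hj : j = i
    · subst hj
      have h1 : m j <+: b j ++ [t] := hi.trans ((b j).prefix_append [t])
      simp only [joinBox, expandBox_apply_self]
      rw [if_pos h1, if_pos hi]
    · simp only [joinBox, expandBox_apply_ne hj]

lemma prefix_bit_of_compat_expand {m b : Box s} {i : Fin s} {t : Bool}
    (h : Compat m (expandBox i t b)) (hi : ¬ m i <+: b i) : b i ++ [t] <+: m i := by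
  have h1 := h i
  rw [expandBox_apply_self] at h1
  rcases h1 with h1 | h1
  · rcases List.prefix_concat_iff.mp h1 with h2 | h2
    · exact h2 ▸ List.prefix_refl _
    · exact absurd h2 hi
  · exact h1

lemma compat_expand_of_bit {m b : Box s} {i : Fin s} {t : Bool} (hc : Compat m b)
    (hbit : b i ++ [t] <+: m i) : Compat m (expandBox i t b) := by
  intro j
  by_cases hj : j = i
  · subst hj; right; rw [expandBox_apply_self]; exact hbit
  · rw [expandBox_apply_ne hj]; exact hc j

lemma joinBox_expand_of_bit {m b : Box s} {i : Fin s} {t : Bool}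
    (hi : ¬ m i <+: b i) (hbit : b i ++ [t] <+: m i) :
    joinBox m (expandBox i t b) = joinBox m b := by
  funext j
  by_cases hj : j = i
  · subst hj
    simp only [joinBox, expandBox_apply_self]
    rw [if_neg hi]
    by_cases h2 : m j <+: b j ++ [t]
    · rw [if_pos h2]; exact prefix_antisymm hbit h2
    · rw [if_neg h2]
  · simp only [joinBox, expandBox_apply_ne hj]

lemma meetRef_step {M N N' : Finset (Box s)} (hM : Good M) (hN : Good N)
    (h : SimpleExpansion N N') : Expands (meetRef M N) (meetRef M N') := by
  obtain ⟨i, b, hb, rfl⟩ := h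
  classical
  set S : Finset (Box s) := M.filter (fun m => Compat m b ∧ m i <+: b i) with hS
  have hS_mem : ∀ m' ∈ S, m' ∈ M ∧ Compat m' b ∧ m' i <+: b i := by
    intro m' h'
    simpa [hS, Finset.mem_filter] using h'
  have hmem_S : ∀ m', m' ∈ M → Compat m' b → m' i <+: b i → m' ∈ S := by
    intro m' h1 h2 h3
    simp [hS, Finset.mem_filter, h1, h2, h3]
  have hbt_mem : ∀ t : Bool,
      expandBox i t b ∈ insert (expandBox i false b) (insert (expandBox i true b) (N.erase b)) := by
    intro t; cases t <;> simp
  have F1 : ∀ m ∈ M, ∀ m' ∈ M, joinBox m b = joinBox m' b → m = m' := by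
    intro m hm m' hm' he
    by_contra hne
    obtain ⟨j, hj⟩ := hM m hm m' hm' hne
    have h1 := boxLE_joinBox_left m b j
    have h2 := boxLE_joinBox_left m' b j
    rw [he] at h1
    rcases List.prefix_or_prefix_of_prefix h1 h2 with h | h
    · exact hj.1 h
    · exact hj.2 h
  have fact1 : ∀ (t : Bool), ∀ m' ∈ S, ∀ m'' ∈ S,
      expandBox i t (joinBox m' b) ≠ joinBox m'' b := by
    intro t m' hm' m'' hm'' heq
    have e1 : joinBox m' b i = b i := by
      simp only [joinBox]; exact if_pos (hS_mem m' hm').2.2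
    have e2 : joinBox m'' b i = b i := by
      simp only [joinBox]; exact if_pos (hS_mem m'' hm'').2.2
    have := congrFun heq i
    rw [expandBox_apply_self, e1, e2] at this
    simpa using congrArg List.length this
  set E : Finset (Box s) → Finset (Box s) := fun T =>
    ((meetRef M N) \ T.image (fun m => joinBox m b))
      ∪ T.image (fun m => expandBox i false (joinBox m b))
      ∪ T.image (fun m => expandBox i true (joinBox m b)) with hE
  have memE : ∀ (T : Finset (Box s)) (x : Box s), x ∈ E T ↔
      (x ∈ meetRef M N ∧ ∀ m' ∈ T, x ≠ joinBox m' b)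
      ∨ (∃ m' ∈ T, x = expandBox i false (joinBox m' b))
      ∨ (∃ m' ∈ T, x = expandBox i true (joinBox m' b)) := by
    intro T x
    simp only [hE, Finset.mem_union, Finset.mem_sdiff, Finset.mem_image]
    constructor
    · rintro ((⟨h1, h2⟩ | ⟨m', hm', rfl⟩) | ⟨m', hm', rfl⟩)
      · exact Or.inl ⟨h1, fun m' hm' he => h2 ⟨m', hm', he.symm⟩⟩
      · exact Or.inr (Or.inl ⟨m', hm', rfl⟩)
      · exact Or.inr (Or.inr ⟨m', hm', rfl⟩)
    · rintro (⟨h1, h2⟩ | ⟨m', hm', rfl⟩ | ⟨m', hm', rfl⟩)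
      · exact Or.inl (Or.inl ⟨h1, fun ⟨m', hm', he⟩ => h2 m' hm' he.symm⟩)
      · exact Or.inl (Or.inr ⟨m', hm', rfl⟩)
      · exact Or.inr ⟨m', hm', rfl⟩
  have claim1 : ∀ T : Finset (Box s), T ⊆ S → Expands (meetRef M N) (E T) := by
    intro T
    induction T using Finset.induction_on with
    | empty =>
      intro _
      have he : E ∅ = meetRef M N := by
        ext x; rw [memE]; simp
      rw [he]
      exact Relation.ReflTransGen.refl
    | @insert m T hmT ih =>
      intro hsub
      have hmS : m ∈ S := hsub (Finset.mem_insert_self m T)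
      have hTS : T ⊆ S := (Finset.subset_insert m T).trans hsub
      obtain ⟨hmM, hmc, hmi⟩ := hS_mem m hmS
      refine (ih hTS).trans (Relation.ReflTransGen.single ⟨i, joinBox m b, ?_, ?_⟩)
      · rw [memE]
        refine Or.inl ⟨mem_meetRef.mpr ⟨m, hmM, b, hb, hmc, rfl⟩, ?_⟩
        intro m' hm' he
        have heq : m = m' := F1 m hmM m' (hS_mem m' (hTS hm')).1 he
        subst heq
        exact hmT hm'
      · ext x
        rw [memE]
        simp only [Finset.mem_insert, Finset.mem_erase]
        rw [memE]
        constructor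
        · rintro (⟨h1, h2⟩ | ⟨m', hm', rfl⟩ | ⟨m', hm', rfl⟩)
          · refine Or.inr (Or.inr ⟨h2 m (Or.inl rfl), Or.inl ⟨h1, ?_⟩⟩)
            exact fun m' hm' => h2 m' (Or.inr hm')
          · rcases hm' with rfl | hm'
            · exact Or.inl rfl
            · exact Or.inr (Or.inr ⟨fact1 false m' (hTS hm') m hmS,
                Or.inr (Or.inl ⟨m', hm', rfl⟩)⟩)
          · rcases hm' with rfl | hm'
            · exact Or.inr (Or.inl rfl)
            · exact Or.inr (Or.inr ⟨fact1 true m' (hTS hm') m hmS,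
                Or.inr (Or.inr ⟨m', hm', rfl⟩)⟩)
        · rintro (rfl | rfl | ⟨hne, (⟨h1, h2⟩ | ⟨m', hm', rfl⟩ | ⟨m', hm', rfl⟩)⟩)
          · exact Or.inr (Or.inl ⟨m, Or.inl rfl, rfl⟩)
          · exact Or.inr (Or.inr ⟨m, Or.inl rfl, rfl⟩)
          · refine Or.inl ⟨h1, ?_⟩
            intro m' hm'
            rcases hm' with rfl | hm'
            · exact hne
            · exact h2 m' hm'
          · exact Or.inr (Or.inl ⟨m', Or.inr hm', rfl⟩)
          · exact Or.inr (Or.inr ⟨m', Or.inr hm', rfl⟩)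
  have claim2 : E S = meetRef M (insert (expandBox i false b)
      (insert (expandBox i true b) (N.erase b))) := by
    ext x
    rw [memE, mem_meetRef (P := M)
      (Q := insert (expandBox i false b) (insert (expandBox i true b) (N.erase b)))]
    constructor
    · rintro (⟨h1, h2⟩ | ⟨m', hm', rfl⟩ | ⟨m', hm', rfl⟩)
      · obtain ⟨m, hm, n, hn, hc, rfl⟩ := mem_meetRef.mp h1
        by_cases hnb : n = b
        · subst hnb
          have hmi : ¬ m i <+: n i := fun hmi => h2 m (hmem_S m hm hc hmi) rfl
          have hbi : n i <+: m i := by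
            rcases hc i with h' | h'
            · exact absurd h' hmi
            · exact h'
          obtain ⟨t, ht⟩ := exists_bit_prefix hbi hmi
          exact ⟨m, hm, expandBox i t n, hbt_mem t, compat_expand_of_bit hc ht,
            joinBox_expand_of_bit hmi ht⟩
        · exact ⟨m, hm, n, Finset.mem_insert_of_mem (Finset.mem_insert_of_mem
            (Finset.mem_erase.mpr ⟨hnb, hn⟩)), hc, rfl⟩
      · obtain ⟨hmM, hmc, hmi⟩ := hS_mem m' hm'
        obtain ⟨hcomp, heq⟩ := compat_expand_of_prefix hmc hmi false
        exact ⟨m', hmM, expandBox i false b, hbt_mem false, hcomp, heq⟩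
      · obtain ⟨hmM, hmc, hmi⟩ := hS_mem m' hm'
        obtain ⟨hcomp, heq⟩ := compat_expand_of_prefix hmc hmi true
        exact ⟨m', hmM, expandBox i true b, hbt_mem true, hcomp, heq⟩
    · rintro ⟨m, hm, n, hn, hc, rfl⟩
      have hcase : (∃ t : Bool, n = expandBox i t b) ∨ n ∈ N.erase b := by
        rcases Finset.mem_insert.mp hn with rfl | hn'
        · exact Or.inl ⟨false, rfl⟩
        · rcases Finset.mem_insert.mp hn' with rfl | hn''
          · exact Or.inl ⟨true, rfl⟩
          · exact Or.inr hn''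
      rcases hcase with ⟨t, rfl⟩ | hne
      · have hcb : Compat m b := compat_of_compat_expand hc
        by_cases hmi : m i <+: b i
        · have heq := (compat_expand_of_prefix hcb hmi t).2
          cases t
          · exact Or.inr (Or.inl ⟨m, hmem_S m hm hcb hmi, heq⟩)
          · exact Or.inr (Or.inr ⟨m, hmem_S m hm hcb hmi, heq⟩)
        · have hbit := prefix_bit_of_compat_expand hc hmi
          have heq := joinBox_expand_of_bit hmi hbit
          refine Or.inl ⟨?_, ?_⟩
          · rw [heq]
            exact mem_meetRef.mpr ⟨m, hm, b, hb, hcb, rfl⟩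
          · intro m' hm' he
            rw [heq] at he
            have hmm' : m = m' := F1 m hm m' (hS_mem m' hm').1 he
            rw [hmm'] at hmi
            exact hmi (hS_mem m' hm').2.2
      · refine Or.inl ⟨mem_meetRef.mpr ⟨m, hm, n, Finset.mem_of_mem_erase hne, hc, rfl⟩, ?_⟩
        intro m' hm' he
        have hcompnb : Compat n b := by
          intro j
          have hx1 : n j <+: joinBox m n j := boxLE_joinBox_right hc j
          have hx2 : b j <+: joinBox m n j := by
            rw [he]
            exact boxLE_joinBox_right (hS_mem m' hm').2.1 j
          exact List.prefix_or_prefix_of_prefix hx1 hx2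
        obtain ⟨j, hj⟩ := hN n (Finset.mem_of_mem_erase hne) b hb (Finset.ne_of_mem_erase hne)
        rcases hcompnb j with h' | h'
        · exact hj.1 h'
        · exact hj.2 h'
  rw [← claim2]
  exact claim1 S (le_refl S)

lemma meetRef_mono {M N Y : Finset (Box s)} (hM : Good M) (hN : Good N)
    (h : Expands N Y) : Expands (meetRef M N) (meetRef M Y) := by
  induction h with
  | refl => exact Relation.ReflTransGen.refl
  | @tail c d h1 h2 ih => exact ih.trans (meetRef_step hM (good_of_expands h1 hN) h2)

lemma meetRef_left {M N : Finset (Box s)} (hM : Admissible M) (hN : Admissible N) :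
    Expands M (meetRef M N) := by
  have h := meetRef_mono (good_of_admissible hM) good_trivial hN
  have e : meetRef M (trivialPartition s) = M := by
    rw [meetRef_comm]
    exact meetRef_self good_trivial hM
  rwa [e] at h

lemma meetRef_right {M N : Finset (Box s)} (hM : Admissible M) (hN : Admissible N) :
    Expands N (meetRef M N) := by
  rw [meetRef_comm]
  exact meetRef_left hN hM

lemma meetRef_le {M N Y : Finset (Box s)} (hM : Admissible M) (hN : Admissible N)
    (h1 : Expands M Y) (h2 : Expands N Y) : Expands (meetRef M N) Y := by
  have h := meetRef_mono (good_of_admissible hM) (good_of_admissible hN) h2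
  rwa [meetRef_self (good_of_admissible hM) h1] at h

end GlbProof

/-- characterisation of the greatest lower bound `glb_A(Ω)`. -/
theorem isGlbAbove_iff_no_larger_lower_bound (s : ℕ) (hs : 1 ≤ s)
    (A : Finset (Box s)) (hA : Admissible A)
    (Ω : Set (Finset (Box s))) (hfin : Ω.Finite) (hne : Ω.Nonempty)
    (hadm : ∀ B ∈ Ω, Admissible B) (hAΩ : ∀ B ∈ Ω, Expands A B)
    (M : Finset (Box s)) (hM : Admissible M) :
    IsGlbAbove A Ω M ↔
      (Expands A M ∧ (∀ B ∈ Ω, Expands M B) ∧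
        ¬ ∃ N : Finset (Box s), Admissible N ∧ Expands M N ∧ M ≠ N ∧
          ∀ B ∈ Ω, Expands N B) := by
  constructor
  · rintro ⟨hMadm, hAM, hMB, hglb⟩
    refine ⟨hAM, hMB, ?_⟩
    rintro ⟨N, hNadm, hMN, hMne, hNB⟩
    have hAN : Expands A N := hAM.trans hMN
    have hNM : Expands N M := hglb N hNadm hAN hNB
    exact hMne (expands_antisymm (good_of_admissible hM) (good_of_admissible hNadm) hMN hNM)
  · rintro ⟨hAM, hMB, hmax⟩
    refine ⟨hM, hAM, hMB, ?_⟩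
    intro N hNadm hAN hNB
    have hMD : Expands M (meetRef M N) := meetRef_left hM hNadm
    have hND : Expands N (meetRef M N) := meetRef_right hM hNadm
    have hDadm : Admissible (meetRef M N) := hM.trans hMD
    have hDB : ∀ B ∈ Ω, Expands (meetRef M N) B :=
      fun B hB => meetRef_le hM hNadm (hMB B hB) (hNB B hB)
    have hMeq : M = meetRef M N := by
      by_contra hne
      exact hmax ⟨meetRef M N, hDadm, hMD, hne, hDB⟩
    rw [hMeq]
    exact hND


end BrinThompson
end

section
/- Let Y be an admissible partition of C^s and let Y₀ ≠ Y₁ be simple contractions of Y of colours a and b respectively, which are not disjoint, and suppose there is an admissible partition A with A ≤ Y₀ and A ≤ Y₁. Label 1, 2 the two boxes of Y merged in Y₀ and 2, 3 the two boxes of Y merged in Y₁ (box 2 being common). Then the boxes 1 and 3 are distinct and a ≠ b. -/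
namespace BrinThompson

private lemma expand_apply_self {s : ℕ} (i : Fin s) (t : Bool) (b : Box s) :
    expandBox i t b i = b i ++ [t] := by simp [expandBox]

private lemma expand_apply_ne {s : ℕ} {i j : Fin s} (t : Bool) (b : Box s) (h : j ≠ i) :
    expandBox i t b j = b j := by simp [expandBox, Function.update_of_ne h]

private lemma expand_inj {s : ℕ} {i : Fin s} {t u : Bool} {b c : Box s}
    (h : expandBox i t b = expandBox i u c) : t = u ∧ b = c := by
  have hi := congrFun h i
  rw [expand_apply_self, expand_apply_self] at hi
  obtain ⟨hbc, htu⟩ := List.append_inj' hi rfl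
  refine ⟨by simpa using htu, funext fun j => ?_⟩
  by_cases hj : j = i
  · subst hj; exact hbc
  · have := congrFun h j
    rwa [expand_apply_ne _ _ hj, expand_apply_ne _ _ hj] at this

private lemma expand_ne {s : ℕ} (i : Fin s) (b : Box s) :
    expandBox i false b ≠ expandBox i true b := by
  intro h; exact Bool.false_ne_true (expand_inj h).1

private lemma reconstruct {s : ℕ} {i : Fin s} {Z Y : Finset (Box s)} {B : Box s}
    (hB : B ∈ Z)
    (hY : Y = insert (expandBox i false B) (insert (expandBox i true B) (Z.erase B)))
    (hf : expandBox i false B ∉ Z) (ht : expandBox i true B ∉ Z) :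
    Z = insert B (Y \ {expandBox i false B, expandBox i true B}) := by
  ext y
  simp only [hY, Finset.mem_insert, Finset.mem_sdiff, Finset.mem_erase,
    Finset.mem_singleton]
  constructor
  · intro hy
    by_cases hyB : y = B
    · exact Or.inl hyB
    · refine Or.inr ⟨Or.inr (Or.inr ⟨hyB, hy⟩), ?_⟩
      push_neg
      exact ⟨fun h => hf (h ▸ hy), fun h => ht (h ▸ hy)⟩
  · rintro (rfl | ⟨h1, h2⟩)
    · exact hB
    · push_neg at h2
      rcases h1 with h | h | ⟨_, h⟩
      · exact absurd h h2.1
      · exact absurd h h2.2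
      · exact h

/-- two different, non-disjoint simple contractions of `Y` lying above a common
admissible `A` have different colours, and the two non-common merged boxes are distinct. -/
theorem distinct_colours_of_overlapping_contractions (s : ℕ) (hs : 1 ≤ s)
    (Y : Finset (Box s)) (hY : Admissible Y)
    (a b : Fin s) (Y0 Y1 : Finset (Box s))
    (hY0 : Admissible Y0) (hY1 : Admissible Y1)
    (hc0 : SimpleExpansionC a Y0 Y) (hc1 : SimpleExpansionC b Y1 Y)
    (hne : Y0 ≠ Y1) (hnd : ((Y \ Y0) ∩ (Y \ Y1)).Nonempty)
    (A : Finset (Box s)) (hA : Admissible A)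
    (hA0 : Expands A Y0) (hA1 : Expands A Y1)
    (x1 x2 x3 : Box s) (h12 : x1 ≠ x2) (h23 : x2 ≠ x3)
    (hm0 : Y \ Y0 = {x1, x2}) (hm1 : Y \ Y1 = {x2, x3}) :
    x1 ≠ x3 ∧ a ≠ b := by
  obtain ⟨B0, hB0, hYeq0⟩ := hc0
  obtain ⟨B1, hB1, hYeq1⟩ := hc1
  -- Y \ Y0 is contained in the pair of children of B0, similarly for Y1
  have hsub0 : Y \ Y0 ⊆ {expandBox a false B0, expandBox a true B0} := by
    intro y hy
    rw [Finset.mem_sdiff, hYeq0] at hy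
    obtain ⟨hy1, hy2⟩ := hy
    simp only [Finset.mem_insert, Finset.mem_erase, Finset.mem_singleton] at hy1 ⊢
    rcases hy1 with h | h | ⟨_, h⟩
    · exact Or.inl h
    · exact Or.inr h
    · exact absurd h hy2
  have hsub1 : Y \ Y1 ⊆ {expandBox b false B1, expandBox b true B1} := by
    intro y hy
    rw [Finset.mem_sdiff, hYeq1] at hy
    obtain ⟨hy1, hy2⟩ := hy
    simp only [Finset.mem_insert, Finset.mem_erase, Finset.mem_singleton] at hy1 ⊢
    rcases hy1 with h | h | ⟨_, h⟩
    · exact Or.inl h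
    · exact Or.inr h
    · exact absurd h hy2
  rw [hm0] at hsub0
  rw [hm1] at hsub1
  have hpair0 : ({x1, x2} : Finset (Box s))
      = {expandBox a false B0, expandBox a true B0} := by
    apply Finset.eq_of_subset_of_card_le hsub0
    rw [Finset.card_pair h12]
    exact (Finset.card_insert_le _ _).trans (by simp)
  have hpair1 : ({x2, x3} : Finset (Box s))
      = {expandBox b false B1, expandBox b true B1} := by
    apply Finset.eq_of_subset_of_card_le hsub1
    rw [Finset.card_pair h23]
    exact (Finset.card_insert_le _ _).trans (by simp)
  -- extract bits
  have hx1 : ∃ t : Bool, x1 = expandBox a t B0 := by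
    have : x1 ∈ ({expandBox a false B0, expandBox a true B0} : Finset (Box s)) := by
      rw [← hpair0]; simp
    simp only [Finset.mem_insert, Finset.mem_singleton] at this
    rcases this with h | h
    · exact ⟨false, h⟩
    · exact ⟨true, h⟩
  have hx2a : ∃ t : Bool, x2 = expandBox a t B0 := by
    have : x2 ∈ ({expandBox a false B0, expandBox a true B0} : Finset (Box s)) := by
      rw [← hpair0]; simp
    simp only [Finset.mem_insert, Finset.mem_singleton] at this
    rcases this with h | h
    · exact ⟨false, h⟩
    · exact ⟨true, h⟩
  have hx2b : ∃ t : Bool, x2 = expandBox b t B1 := by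
    have : x2 ∈ ({expandBox b false B1, expandBox b true B1} : Finset (Box s)) := by
      rw [← hpair1]; simp
    simp only [Finset.mem_insert, Finset.mem_singleton] at this
    rcases this with h | h
    · exact ⟨false, h⟩
    · exact ⟨true, h⟩
  have hx3 : ∃ t : Bool, x3 = expandBox b t B1 := by
    have : x3 ∈ ({expandBox b false B1, expandBox b true B1} : Finset (Box s)) := by
      rw [← hpair1]; simp
    simp only [Finset.mem_insert, Finset.mem_singleton] at this
    rcases this with h | h
    · exact ⟨false, h⟩
    · exact ⟨true, h⟩
  obtain ⟨t1, ht1⟩ := hx1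
  obtain ⟨t2, ht2⟩ := hx2a
  obtain ⟨u2, hu2⟩ := hx2b
  obtain ⟨u3, hu3⟩ := hx3
  -- different colours
  have hab : a ≠ b := by
    intro hEq
    subst hEq
    have h22 : expandBox a t2 B0 = expandBox a u2 B1 := by rw [← ht2, ← hu2]
    obtain ⟨-, hBB⟩ := expand_inj h22
    subst hBB
    -- the children of B0 are not in Y0, nor in Y1
    have hf0 : expandBox a false B0 ∉ Y0 := by
      have : expandBox a false B0 ∈ Y \ Y0 := by rw [hm0, hpair0]; simp
      exact (Finset.mem_sdiff.mp this).2
    have ht0 : expandBox a true B0 ∉ Y0 := by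
      have : expandBox a true B0 ∈ Y \ Y0 := by
        rw [hm0, hpair0]; simp
      exact (Finset.mem_sdiff.mp this).2
    have hf1 : expandBox a false B0 ∉ Y1 := by
      have : expandBox a false B0 ∈ Y \ Y1 := by rw [hm1, hpair1]; simp
      exact (Finset.mem_sdiff.mp this).2
    have ht1' : expandBox a true B0 ∉ Y1 := by
      have : expandBox a true B0 ∈ Y \ Y1 := by rw [hm1, hpair1]; simp
      exact (Finset.mem_sdiff.mp this).2
    have hZ0 := reconstruct hB0 hYeq0 hf0 ht0
    have hZ1 := reconstruct hB1 hYeq1 hf1 ht1'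
    exact hne (hZ0.trans hZ1.symm)
  refine ⟨?_, hab⟩
  -- distinct boxes
  intro h13
  have hkey : x1 b = x2 b := by
    rw [ht1, ht2, expand_apply_ne _ _ (Ne.symm hab), expand_apply_ne _ _ (Ne.symm hab)]
  have hu : u2 ≠ u3 := by
    intro h; apply h23; rw [hu2, hu3, h]
  apply hu
  have h2b : x2 b = B1 b ++ [u2] := by rw [hu2, expand_apply_self]
  have h3b : x3 b = B1 b ++ [u3] := by rw [hu3, expand_apply_self]
  have : B1 b ++ [u2] = B1 b ++ [u3] := by
    rw [← h2b, ← h3b, ← hkey, h13]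
  simpa using List.append_cancel_left this

end BrinThompson
end

section
/- For every s ≥ 1, the geometric realization |N(𝔄)| of the nerve of the poset 𝔄 of admissible partitions of C^s is contractible. -/
namespace BrinThompson

-- The minimal element of the poset.
noncomputable def minEl (s : ℕ) : {A : Finset (Box s) // Admissible A} :=
  ⟨trivialPartition s, Relation.ReflTransGen.refl⟩

-- The vertex at the minimal element.
noncomputable def deltaMin (s : ℕ) :
    OrderComplex {A : Finset (Box s) // Admissible A} (fun A B => Expands A.1 B.1) := by
  refine ⟨fun A => if A = minEl s then 1 else 0, ?_, ?_, ?_, ?_⟩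
  · refine Set.Finite.subset (Set.finite_singleton (minEl s)) ?_
    intro x hx
    simp only [Function.mem_support] at hx
    by_contra h
    simp only [Set.mem_singleton_iff] at h
    simp [h] at hx
  · intro x; positivity
  · refine Set.Subsingleton.isChain ?_
    intro x hx y hy
    simp only [Function.mem_support] at hx hy
    by_contra
    rcases eq_or_ne x (minEl s) with h | h
    · rcases eq_or_ne y (minEl s) with h' | h'
      · simp_all
      · simp [h'] at hy
    · simp [h] at hx
  · rw [finsum_eq_single _ (minEl s) (fun x hx => by simp [hx])]
    simp

/-- the geometric realization of the nerve of the poset `𝔄` of admissible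
partitions of `C^s` is contractible. -/
theorem orderComplex_admissible_contractible (s : ℕ) (hs : 1 ≤ s) :
    ContractibleSpace
      (OrderComplex {A : Finset (Box s) // Admissible A}
        (fun A B => Expands A.1 B.1)) := by
  set P := {A : Finset (Box s) // Admissible A} with hP
  set X := OrderComplex P (fun A B => Expands A.1 B.1) with hX
  rw [contractible_iff_id_nullhomotopic]
  refine ⟨deltaMin s, ⟨⟨⟨fun p => ⟨fun A =>
      (1 - (p.1 : ℝ)) * p.2.1 A + (p.1 : ℝ) * (deltaMin s).1 A, ?_, ?_, ?_, ?_⟩, ?_⟩, ?_, ?_⟩⟩⟩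
  case refine_1 =>
    refine Set.Finite.subset (p.2.2.1.union (deltaMin s).2.1) ?_
    intro A hA
    simp only [Function.mem_support, Set.mem_union] at hA ⊢
    by_contra h
    push_neg at h
    simp [h.1, h.2] at hA
  case refine_2 =>
    intro A
    exact add_nonneg (mul_nonneg (unitInterval.one_minus_nonneg p.1) (p.2.2.2.1 A))
      (mul_nonneg (unitInterval.nonneg p.1) ((deltaMin s).2.2.1 A))
  case refine_3 =>
    have hsub : Function.support (fun A =>
        (1 - (p.1 : ℝ)) * p.2.1 A + (p.1 : ℝ) * (deltaMin s).1 A) ⊆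
        Function.support p.2.1 ∪ {minEl s} := by
      intro A hA
      simp only [Function.mem_support, Set.mem_union, Set.mem_singleton_iff] at hA ⊢
      by_contra h
      push_neg at h
      have : (deltaMin s).1 A = 0 := by simp [deltaMin, h.2]
      simp [h.1, this] at hA
    refine IsChain.mono hsub ?_
    intro x hx y hy hxy
    rcases hx with hx | hx
    · rcases hy with hy | hy
      · exact p.2.2.2.2.1 hx hy hxy
      · right
        simp only [Set.mem_singleton_iff] at hy
        subst hy
        exact x.2
    · left
      simp only [Set.mem_singleton_iff] at hx
      subst hx
      exact y.2
  case refine_4 =>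
    have hf1 : (Function.support fun A => (1 - (p.1 : ℝ)) * p.2.1 A).Finite := by
      refine p.2.2.1.subset ?_
      intro A hA
      simp only [Function.mem_support] at hA ⊢
      exact fun h => hA (by simp [h])
    have hf2 : (Function.support fun A => (p.1 : ℝ) * (deltaMin s).1 A).Finite := by
      refine (deltaMin s).2.1.subset ?_
      intro A hA
      simp only [Function.mem_support] at hA ⊢
      exact fun h => hA (by simp [h])
    rw [finsum_add_distrib hf1 hf2, ← mul_finsum p.2.1 _,
      ← mul_finsum (deltaMin s).1 _, p.2.2.2.2.2, (deltaMin s).2.2.2.2]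
    ring
  case refine_5 =>
    refine Continuous.subtype_mk ?_ _
    refine continuous_pi fun A => ?_
    have ht : Continuous fun p : unitInterval × X => (p.1 : ℝ) :=
      continuous_subtype_val.comp continuous_fst
    have hf : Continuous fun p : unitInterval × X => p.2.1 A :=
      (continuous_apply A).comp (continuous_subtype_val.comp continuous_snd)
    exact ((continuous_const.sub ht).mul hf).add (ht.mul continuous_const)
  case refine_6 =>
    intro f
    ext A
    simp
  case refine_7 =>
    intro f
    ext A
    simp


end BrinThompson
end
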